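/- Let σ ∈ (0,1) and τ ∈ ℝ. For every multi-index β ∈ ℕ^d there is a constant C, depending only on d, σ, τ, β, such that for all ξ, η ∈ ℝ^d, | ∂_ξ^β ( e^{τ⟨ξ+η⟩^σ − τ⟨ξ⟩^σ} ) | ≤ C · ⟨ξ⟩^{−|β|} · ⟨η⟩^{2|β|} · e^{τ⟨ξ+η⟩^σ − τ⟨ξ⟩^σ}. -/

import Mathlib

open MeasureTheory Real
open scoped FourierTransform ENNReal

noncomputable section

/-- `ℝ^d` as a Euclidean space. -/
abbrev E (d : ℕ) := EuclideanSpace ℝ (Fin d)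

/-- The Japanese bracket `⟨ξ⟩ = (1 + |ξ|²)^{1/2}`. -/
def jap {d : ℕ} (ξ : E d) : ℝ := Real.sqrt (1 + ‖ξ‖ ^ 2)

/-- Partial derivative in the `i`-th coordinate direction. -/
def pder {d : ℕ} {F : Type*} [NormedAddCommGroup F] [NormedSpace ℝ F]
    (i : Fin d) (f : E d → F) : E d → F :=
  fun x => fderiv ℝ f x (EuclideanSpace.single i 1)

/-- Multi-index partial derivative `∂^α`. -/
def mpder {d : ℕ} {F : Type*} [NormedAddCommGroup F] [NormedSpace ℝ F]
    (α : Fin d → ℕ) (f : E d → F) : E d → F :=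
  (List.finRange d).foldr (fun i g => (pder i)^[α i] g) f

namespace S15

variable {d : ℕ}

/-- squared weight -/
def w (ξ : E d) : ℝ := 1 + ‖ξ‖ ^ 2

lemma w_eq (ξ : E d) : w ξ = 1 + ∑ i, ξ i ^ 2 := by
  have : ‖ξ‖ ^ 2 = ∑ i, ξ i ^ 2 := by
    rw [EuclideanSpace.norm_eq, sq_sqrt (by positivity)]
    simp [Real.norm_eq_abs, sq_abs]
  rw [w, this]

lemma one_le_w (ξ : E d) : 1 ≤ w ξ := by
  have : (0:ℝ) ≤ ‖ξ‖ ^ 2 := by positivity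
  simp only [w]; linarith

lemma w_pos (ξ : E d) : 0 < w ξ := lt_of_lt_of_le one_pos (one_le_w ξ)

/-- `Jp t = ⟨ξ⟩^t` as rpow of `w`. -/
def Jp (t : ℝ) (ξ : E d) : ℝ := w ξ ^ (t / 2 : ℝ)

lemma jap_eq (ξ : E d) : jap ξ = Jp 1 ξ := by
  rw [jap, Jp, Real.sqrt_eq_rpow]
  norm_num [w]

lemma jap_rpow (s : ℝ) (ξ : E d) : jap ξ ^ s = Jp s ξ := by
  rw [jap_eq, Jp, Jp, ← Real.rpow_mul (le_of_lt (w_pos ξ))]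
  congr 1; ring

lemma Jp_pos (t : ℝ) (ξ : E d) : 0 < Jp t ξ := Real.rpow_pos_of_pos (w_pos ξ) _

lemma Jp_zero (ξ : E d) : Jp 0 ξ = 1 := by simp [Jp]

lemma Jp_add (s t : ℝ) (ξ : E d) : Jp (s + t) ξ = Jp s ξ * Jp t ξ := by
  rw [Jp, Jp, Jp, ← Real.rpow_add (w_pos ξ)]; ring_nf

lemma Jp_le_Jp {s t : ℝ} (h : s ≤ t) (ξ : E d) : Jp s ξ ≤ Jp t ξ :=
  Real.rpow_le_rpow_of_exponent_le (one_le_w ξ) (by linarith)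

lemma one_le_Jp {t : ℝ} (ht : 0 ≤ t) (ξ : E d) : 1 ≤ Jp t ξ := by
  rw [← Jp_zero (ξ := ξ)]; exact Jp_le_Jp ht ξ

lemma one_le_jap (ξ : E d) : 1 ≤ jap ξ := by
  rw [jap_eq]; exact one_le_Jp one_pos.le ξ

lemma jap_pos (ξ : E d) : 0 < jap ξ := lt_of_lt_of_le one_pos (one_le_jap ξ)

lemma norm_le_jap (ξ : E d) : ‖ξ‖ ≤ jap ξ := by
  rw [jap]
  have : ‖ξ‖ = Real.sqrt (‖ξ‖^2) := by rw [Real.sqrt_sq (norm_nonneg ξ)]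
  rw [this]
  exact Real.sqrt_le_sqrt (by nlinarith [norm_nonneg ξ])

lemma coord_le_jap (ξ : E d) (i : Fin d) : |ξ i| ≤ jap ξ := by
  refine le_trans ?_ (norm_le_jap ξ)
  have := EuclideanSpace.norm_eq ξ
  have h2 : |ξ i| = Real.sqrt ((ξ i)^2) := by rw [Real.sqrt_sq_eq_abs]
  rw [h2, this]
  apply Real.sqrt_le_sqrt
  simp only [Real.norm_eq_abs, sq_abs]
  exact Finset.single_le_sum (f := fun j => (ξ j)^2) (fun j _ => by positivity) (Finset.mem_univ i)

/-- Symbol class: functions bounded (with all structure) by `⟨ξ⟩^m`. -/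
inductive Sym : ℝ → (E d → ℝ) → Prop
  | jpow (t : ℝ) : Sym t (Jp t)
  | coord (i : Fin d) : Sym 1 (fun ξ => ξ i)
  | smul (c : ℝ) {m f} : Sym m f → Sym m (fun ξ => c * f ξ)
  | add {m f g} : Sym m f → Sym m g → Sym m (fun ξ => f ξ + g ξ)
  | mul {m n f g} : Sym m f → Sym n g → Sym (m + n) (fun ξ => f ξ * g ξ)

lemma Sym.congr {m : ℝ} {f g : E d → ℝ} (h : Sym m f) (e : ∀ ξ, f ξ = g ξ) : Sym m g := by
  have : f = g := funext e
  rwa [this] at h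

lemma Sym.bound {m : ℝ} {f : E d → ℝ} (h : Sym m f) :
    ∃ C : ℝ, 0 < C ∧ ∀ ξ, |f ξ| ≤ C * Jp m ξ := by
  induction h with
  | jpow t => exact ⟨1, one_pos, fun ξ => by rw [abs_of_pos (Jp_pos t ξ), one_mul]⟩
  | coord i =>
      exact ⟨1, one_pos, fun ξ => by rw [one_mul, ← jap_rpow]; simpa using coord_le_jap ξ i⟩
  | smul c h ih =>
      obtain ⟨C, hC, hb⟩ := ih
      refine ⟨(|c| + 1) * C, by positivity, fun ξ => ?_⟩
      simp only [abs_mul]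
      calc |c| * |_| ≤ (|c| + 1) * (C * Jp _ ξ) := by
            apply mul_le_mul (by linarith [abs_nonneg c]) (hb ξ) (abs_nonneg _)
              (by linarith [abs_nonneg c])
        _ = (|c| + 1) * C * Jp _ ξ := by ring
  | @add m f g h1 h2 ih1 ih2 =>
      obtain ⟨C1, hC1, hb1⟩ := ih1
      obtain ⟨C2, hC2, hb2⟩ := ih2
      refine ⟨C1 + C2, by positivity, fun ξ => ?_⟩
      calc |f ξ + g ξ| ≤ |f ξ| + |g ξ| := abs_add_le _ _
        _ ≤ C1 * Jp m ξ + C2 * Jp m ξ := add_le_add (hb1 ξ) (hb2 ξ)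
        _ = (C1 + C2) * Jp m ξ := by ring
  | @mul m n f g h1 h2 ih1 ih2 =>
      obtain ⟨C1, hC1, hb1⟩ := ih1
      obtain ⟨C2, hC2, hb2⟩ := ih2
      refine ⟨C1 * C2, by positivity, fun ξ => ?_⟩
      rw [Jp_add]
      calc |f ξ * g ξ| = |f ξ| * |g ξ| := abs_mul _ _
        _ ≤ (C1 * Jp m ξ) * (C2 * Jp n ξ) :=
            mul_le_mul (hb1 ξ) (hb2 ξ) (abs_nonneg _)
              (mul_nonneg hC1.le (Jp_pos _ ξ).le)
        _ = C1 * C2 * (Jp m ξ * Jp n ξ) := by ring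

/-- derivative of w -/
def wL (ξ : E d) : E d →L[ℝ] ℝ := ∑ j, (2 * ξ j) • (EuclideanSpace.proj j : E d →L[ℝ] ℝ)

lemma wL_apply (ξ : E d) (i : Fin d) : wL ξ (EuclideanSpace.single i 1) = 2 * ξ i := by
  rw [wL, ContinuousLinearMap.sum_apply]
  have : ∀ j, ((2 * ξ j) • (EuclideanSpace.proj j : E d →L[ℝ] ℝ)) (EuclideanSpace.single i 1)
      = if j = i then 2 * ξ j else 0 := by
    intro j
    simp [EuclideanSpace.proj, EuclideanSpace.single_apply]
  rw [Finset.sum_congr rfl (fun j _ => this j)]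
  simp

lemma hasFDerivAt_w (ξ : E d) : HasFDerivAt w (wL ξ) ξ := by
  have h : HasFDerivAt (fun ξ : E d => 1 + ∑ j, ξ j ^ 2) (wL ξ) ξ := by
    apply HasFDerivAt.const_add
    have : ∀ j ∈ Finset.univ, HasFDerivAt (fun ξ : E d => ξ j ^ 2)
        ((2 * ξ j) • (EuclideanSpace.proj j : E d →L[ℝ] ℝ)) ξ := by
      intro j _
      have hp : HasFDerivAt (fun ξ : E d => ξ j) (EuclideanSpace.proj j : E d →L[ℝ] ℝ) ξ :=
        (EuclideanSpace.proj j : E d →L[ℝ] ℝ).hasFDerivAt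
      have := hp.fun_mul hp
      refine (this.congr_fderiv ?_).congr_of_eventuallyEq ?_
      · ext v; simp only [ContinuousLinearMap.add_apply, ContinuousLinearMap.smul_apply, smul_eq_mul]; ring
      · exact Filter.Eventually.of_forall fun x => by simp only [sq]
    exact HasFDerivAt.fun_sum this
  have : w = fun ξ : E d => 1 + ∑ j, ξ j ^ 2 := funext w_eq
  rwa [this]

lemma hasFDerivAt_Jp (t : ℝ) (ξ : E d) :
    HasFDerivAt (Jp t) ((t / 2 * w ξ ^ (t / 2 - 1 : ℝ)) • wL ξ) ξ := by
  have hr : HasDerivAt (fun x : ℝ => x ^ (t / 2 : ℝ)) (t / 2 * w ξ ^ (t / 2 - 1 : ℝ)) (w ξ) :=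
    Real.hasDerivAt_rpow_const (Or.inl (w_pos ξ).ne')
  exact hr.comp_hasFDerivAt ξ (hasFDerivAt_w ξ)

lemma differentiable_Jp (t : ℝ) : Differentiable ℝ (Jp t : E d → ℝ) :=
  fun ξ => (hasFDerivAt_Jp t ξ).differentiableAt

lemma pder_Jp (t : ℝ) (i : Fin d) :
    pder i (Jp t : E d → ℝ) = fun ξ => t * (ξ i * Jp (t - 2) ξ) := by
  funext ξ
  rw [pder, (hasFDerivAt_Jp t ξ).fderiv]
  rw [ContinuousLinearMap.smul_apply, wL_apply]
  rw [smul_eq_mul, Jp]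
  have : (t - 2) / 2 = t / 2 - 1 := by ring
  rw [this]; ring

lemma Sym.deriv {m : ℝ} {f : E d → ℝ} (h : Sym m f) :
    Differentiable ℝ f ∧ ∀ i, Sym (m - 1) (pder i f) := by
  induction h with
  | jpow t =>
      refine ⟨differentiable_Jp t, fun i => ?_⟩
      rw [pder_Jp]
      have : Sym (1 + (t - 2)) (fun ξ : E d => ξ i * Jp (t - 2) ξ) :=
        Sym.mul (Sym.coord i) (Sym.jpow (t - 2))
      have h2 := Sym.smul t this
      have e : 1 + (t - 2) = t - 1 := by ring
      rwa [e] at h2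
  | coord i =>
      have hdiff : Differentiable ℝ (fun ξ : E d => ξ i) :=
        (EuclideanSpace.proj i : E d →L[ℝ] ℝ).differentiable
      refine ⟨hdiff, fun j => ?_⟩
      have hp : pder j (fun ξ : E d => ξ i)
          = fun ξ : E d => (if i = j then (1:ℝ) else 0) * Jp 0 ξ := by
        funext ξ
        rw [pder]
        have hfe : (fun ξ : E d => ξ i) = ⇑(EuclideanSpace.proj (𝕜 := ℝ) i) := rfl
        rw [hfe, ContinuousLinearMap.fderiv]
        simp [EuclideanSpace.proj, EuclideanSpace.single_apply, Jp_zero, eq_comm]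
      rw [hp]
      have := Sym.smul (if i = j then (1:ℝ) else 0) (Sym.jpow (d := d) 0)
      have e : (1:ℝ) - 1 = 0 := by ring
      rwa [e]
  | @smul c m f hf ih =>
      obtain ⟨hdiff, hsym⟩ := ih
      refine ⟨hdiff.const_mul c, fun i => ?_⟩
      have hp : pder i (fun ξ => c * f ξ) = fun ξ => c * pder i f ξ := by
        funext ξ
        rw [pder, pder, fderiv_const_mul (hdiff ξ)]
        simp
      rw [hp]
      exact Sym.smul c (hsym i)
  | @add m f g hf hg ihf ihg =>
      obtain ⟨hdf, hsf⟩ := ihf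
      obtain ⟨hdg, hsg⟩ := ihg
      refine ⟨hdf.add hdg, fun i => ?_⟩
      have hp : pder i (fun ξ => f ξ + g ξ) = fun ξ => pder i f ξ + pder i g ξ := by
        funext ξ
        rw [pder, pder, pder, fderiv_fun_add (hdf ξ) (hdg ξ)]
        simp
      rw [hp]
      exact Sym.add (hsf i) (hsg i)
  | @mul m n f g hf hg ihf ihg =>
      obtain ⟨hdf, hsf⟩ := ihf
      obtain ⟨hdg, hsg⟩ := ihg
      refine ⟨hdf.mul hdg, fun i => ?_⟩
      have hp : pder i (fun ξ => f ξ * g ξ)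
          = fun ξ => (f ξ * pder i g ξ) + (g ξ * pder i f ξ) := by
        funext ξ
        rw [pder, pder, pder, fderiv_fun_mul (hdf ξ) (hdg ξ)]
        simp
      rw [hp]
      have h1 : Sym (m + (n - 1)) (fun ξ => f ξ * pder i g ξ) := Sym.mul hf (hsg i)
      have h2 : Sym (n + (m - 1)) (fun ξ => g ξ * pder i f ξ) := Sym.mul hg (hsf i)
      have e1 : m + (n - 1) = m + n - 1 := by ring
      have e2 : n + (m - 1) = m + n - 1 := by ring
      rw [e1] at h1; rw [e2] at h2
      exact Sym.add h1 h2

lemma Sym.differentiable {m : ℝ} {f : E d → ℝ} (h : Sym m f) : Differentiable ℝ f :=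
  h.deriv.1

lemma Sym.pder {m : ℝ} {f : E d → ℝ} (h : Sym m f) (i : Fin d) : Sym (m - 1) (pder i f) :=
  h.deriv.2 i


lemma peetre (ξ η : E d) : jap ξ ≤ Real.sqrt 2 * jap η * jap (ξ + η) := by
  have hw : w ξ ≤ 2 * w η * w (ξ + η) := by
    have h1 : ‖ξ‖ ≤ ‖ξ + η‖ + ‖η‖ := by
      calc ‖ξ‖ = ‖(ξ + η) - η‖ := by rw [add_sub_cancel_right]
        _ ≤ ‖ξ + η‖ + ‖η‖ := norm_sub_le _ _
    have h2 : (0:ℝ) ≤ ‖ξ + η‖ := norm_nonneg _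
    have h3 : (0:ℝ) ≤ ‖η‖ := norm_nonneg _
    have h4 : (0:ℝ) ≤ ‖ξ‖ := norm_nonneg _
    simp only [w]
    nlinarith [sq_nonneg (‖ξ + η‖ - ‖η‖), sq_nonneg (‖ξ + η‖ * ‖η‖)]
  have : jap ξ = Real.sqrt (w ξ) := rfl
  rw [this]
  calc Real.sqrt (w ξ) ≤ Real.sqrt (2 * w η * w (ξ + η)) := Real.sqrt_le_sqrt hw
    _ = Real.sqrt 2 * jap η * jap (ξ + η) := by
        rw [Real.sqrt_mul (by nlinarith [w_pos η] : (0:ℝ) ≤ 2 * w η),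
          Real.sqrt_mul (by norm_num : (0:ℝ) ≤ 2)]
        rfl

lemma jap_nonneg (ξ : E d) : 0 ≤ jap ξ := (jap_pos ξ).le

lemma sqrt2_jap_pos (η : E d) : 0 < Real.sqrt 2 * jap η :=
  mul_pos (by norm_num [Real.sqrt_pos]) (jap_pos η)

lemma rpow_neg_le {a b : ℝ} (ha : 0 < a) (hab : a ≤ b) {k : ℝ} (hk : 0 ≤ k) :
    b ^ (-k) ≤ a ^ (-k) := by
  rw [Real.rpow_neg (by linarith), Real.rpow_neg ha.le]
  apply inv_anti₀ (Real.rpow_pos_of_pos ha _)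
  exact Real.rpow_le_rpow ha.le hab hk

/-- Peetre in rpow form, along a segment point `ξ + t • η`, `t ∈ [0,1]`. -/
lemma jap_seg_bound (ξ η : E d) {t : ℝ} (ht0 : 0 ≤ t) (ht1 : t ≤ 1) {k : ℝ} (hk : 0 ≤ k) :
    jap (ξ + t • η) ^ (-k) ≤ (Real.sqrt 2 * jap η) ^ k * jap ξ ^ (-k) := by
  have hη : jap (t • η) ≤ jap η := by
    rw [jap, jap]
    apply Real.sqrt_le_sqrt
    have : ‖t • η‖ ≤ ‖η‖ := by
      rw [norm_smul]
      calc ‖t‖ * ‖η‖ ≤ 1 * ‖η‖ := by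
            apply mul_le_mul_of_nonneg_right _ (norm_nonneg η)
            rw [Real.norm_eq_abs, abs_of_nonneg ht0]; exact ht1
        _ = ‖η‖ := one_mul _
    nlinarith [norm_nonneg η, norm_nonneg (t • η), this]
  have hp : jap ξ ≤ Real.sqrt 2 * jap η * jap (ξ + t • η) := by
    calc jap ξ ≤ Real.sqrt 2 * jap (t • η) * jap (ξ + t • η) := peetre ξ (t • η)
      _ ≤ Real.sqrt 2 * jap η * jap (ξ + t • η) := by
          apply mul_le_mul_of_nonneg_right _ (jap_pos _).le
          apply mul_le_mul_of_nonneg_left hη (by positivity)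
  have hqpos : 0 < jap ξ / (Real.sqrt 2 * jap η) := by
    exact div_pos (jap_pos ξ) (sqrt2_jap_pos η)
  have hq : jap ξ / (Real.sqrt 2 * jap η) ≤ jap (ξ + t • η) := by
    rw [div_le_iff₀ (sqrt2_jap_pos η)]
    calc jap ξ ≤ Real.sqrt 2 * jap η * jap (ξ + t • η) := hp
      _ = jap (ξ + t • η) * (Real.sqrt 2 * jap η) := by ring
  calc jap (ξ + t • η) ^ (-k) ≤ (jap ξ / (Real.sqrt 2 * jap η)) ^ (-k) :=
        rpow_neg_le hqpos hq hk
    _ = (Real.sqrt 2 * jap η) ^ k * jap ξ ^ (-k) := by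
        rw [Real.rpow_neg hqpos.le, Real.div_rpow (jap_pos ξ).le (sqrt2_jap_pos η).le,
          inv_div, div_eq_mul_inv, ← Real.rpow_neg (jap_pos ξ).le]


lemma abs_coord_le_norm (x : E d) (i : Fin d) : |x i| ≤ ‖x‖ := by
  rw [EuclideanSpace.norm_eq]
  have : |x i| = Real.sqrt ((x i)^2) := (Real.sqrt_sq_eq_abs _).symm
  rw [this]
  apply Real.sqrt_le_sqrt
  simp only [Real.norm_eq_abs, sq_abs]
  exact Finset.single_le_sum (f := fun j => (x j)^2) (fun j _ => by positivity)
    (Finset.mem_univ i)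

lemma euclid_decomp (x : E d) : x = ∑ i, x i • EuclideanSpace.single i (1:ℝ) := by
  have h := (EuclideanSpace.basisFun (Fin d) ℝ).sum_repr x
  simp only [EuclideanSpace.basisFun_repr, EuclideanSpace.basisFun_apply] at h
  exact h.symm

lemma opNorm_le_sum (L : E d →L[ℝ] ℝ) :
    ‖L‖ ≤ ∑ i, |L (EuclideanSpace.single i 1)| := by
  apply ContinuousLinearMap.opNorm_le_bound _
    (Finset.sum_nonneg fun i _ => abs_nonneg _)
  intro x
  have hx : L x = ∑ i, x i * L (EuclideanSpace.single i 1) := by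
    conv_lhs => rw [euclid_decomp x]
    rw [map_sum]
    simp [smul_eq_mul]
  rw [Real.norm_eq_abs, hx]
  calc |∑ i, x i * L (EuclideanSpace.single i 1)|
      ≤ ∑ i, |x i * L (EuclideanSpace.single i 1)| := Finset.abs_sum_le_sum_abs _ _
    _ ≤ ∑ i, ‖x‖ * |L (EuclideanSpace.single i 1)| := by
        apply Finset.sum_le_sum
        intro i _
        rw [abs_mul]
        exact mul_le_mul_of_nonneg_right (abs_coord_le_norm x i) (abs_nonneg _)
    _ = (∑ i, |L (EuclideanSpace.single i 1)|) * ‖x‖ := by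
        rw [← Finset.mul_sum, mul_comm]

lemma fac_bound {σ : ℝ} (hσ1 : σ ≤ 1) {k : ℕ} (hk : 1 ≤ k) {f : E d → ℝ}
    (hf : Sym (σ - k) f) :
    ∃ C : ℝ, 0 < C ∧
      ∀ η ξ : E d, |f (ξ + η) - f ξ| ≤ C * Jp (-(k:ℝ)) ξ * Jp (2 * (k:ℝ)) η := by
  choose C hC using fun i : Fin d => (hf.pder i).bound
  set D : ℝ := (∑ i, C i) + 1 with hD
  have hDpos : 0 < D := by
    have : (0:ℝ) ≤ ∑ i, C i := Finset.sum_nonneg fun i _ => (hC i).1.le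
    linarith
  have hfd : ∀ ζ : E d, ‖fderiv ℝ f ζ‖ ≤ D * Jp (σ - k - 1) ζ := by
    intro ζ
    calc ‖fderiv ℝ f ζ‖ ≤ ∑ i, |fderiv ℝ f ζ (EuclideanSpace.single i 1)| :=
          opNorm_le_sum _
      _ = ∑ i, |pder i f ζ| := by rfl
      _ ≤ ∑ i, C i * Jp (σ - k - 1) ζ := by
          apply Finset.sum_le_sum
          intro i _
          have := (hC i).2 ζ
          have e : σ - (k:ℝ) - 1 = σ - (k:ℝ) - 1 := rfl
          exact this
      _ = (∑ i, C i) * Jp (σ - k - 1) ζ := by rw [← Finset.sum_mul]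
      _ ≤ D * Jp (σ - k - 1) ζ := by
          apply mul_le_mul_of_nonneg_right _ (Jp_pos _ ζ).le
          linarith
  refine ⟨D * (Real.sqrt 2) ^ (k:ℝ), by positivity, fun η ξ => ?_⟩
  set M : ℝ := D * ((Real.sqrt 2 * jap η) ^ (k:ℝ) * jap ξ ^ (-(k:ℝ))) with hM
  have hseg : ∀ x ∈ segment ℝ ξ (ξ + η), ‖fderiv ℝ f x‖ ≤ M := by
    intro x hx
    rw [segment_eq_image'] at hx
    obtain ⟨t, ht, hx⟩ := hx
    have he : x = ξ + t • η := by rw [← hx]; simp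
    rw [he]
    have h1 : Jp (σ - k - 1) (ξ + t • η) ≤ Jp (-(k:ℝ)) (ξ + t • η) :=
      Jp_le_Jp (by push_cast; linarith) _
    have h2 : Jp (-(k:ℝ)) (ξ + t • η) ≤ (Real.sqrt 2 * jap η) ^ (k:ℝ) * jap ξ ^ (-(k:ℝ)) := by
      rw [← jap_rpow]
      exact jap_seg_bound ξ η ht.1 ht.2 (by positivity)
    calc ‖fderiv ℝ f (ξ + t • η)‖ ≤ D * Jp (σ - k - 1) (ξ + t • η) := hfd _
      _ ≤ D * ((Real.sqrt 2 * jap η) ^ (k:ℝ) * jap ξ ^ (-(k:ℝ))) := by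
          apply mul_le_mul_of_nonneg_left _ hDpos.le
          exact le_trans h1 h2
  have hmv : ‖f (ξ + η) - f ξ‖ ≤ M * ‖(ξ + η) - ξ‖ :=
    Convex.norm_image_sub_le_of_norm_fderiv_le
      (fun x _ => (hf.differentiable x)) hseg (convex_segment _ _)
      (left_mem_segment _ _ _) (right_mem_segment _ _ _)
  have hnorm : ‖(ξ + η) - ξ‖ = ‖η‖ := by rw [add_sub_cancel_left]
  rw [hnorm, Real.norm_eq_abs] at hmv
  have hMpos : 0 ≤ M := by
    apply mul_nonneg hDpos.le
    apply mul_nonneg (Real.rpow_nonneg (sqrt2_jap_pos η).le _)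
      (Real.rpow_nonneg (jap_nonneg ξ) _)
  have h4 : ‖η‖ ≤ jap η ^ (1:ℝ) := by
    rw [Real.rpow_one]; exact norm_le_jap η
  have h3 : jap η ^ (k:ℝ) * ‖η‖ ≤ jap η ^ (2 * (k:ℝ)) := by
    calc jap η ^ (k:ℝ) * ‖η‖ ≤ jap η ^ (k:ℝ) * jap η ^ (1:ℝ) :=
          mul_le_mul_of_nonneg_left h4 (Real.rpow_nonneg (jap_nonneg η) _)
      _ = jap η ^ ((k:ℝ) + 1) := (Real.rpow_add (jap_pos η) _ _).symm
      _ ≤ jap η ^ (2 * (k:ℝ)) := by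
          apply Real.rpow_le_rpow_of_exponent_le (one_le_jap η)
          have : (1:ℝ) ≤ (k:ℝ) := by exact_mod_cast hk
          linarith
  calc |f (ξ + η) - f ξ| ≤ M * ‖η‖ := hmv
    _ ≤ D * (Real.sqrt 2) ^ (k:ℝ) * Jp (-(k:ℝ)) ξ * Jp (2 * (k:ℝ)) η := by
        rw [hM, Real.mul_rpow (Real.sqrt_nonneg 2) (jap_nonneg η), ← jap_rpow, ← jap_rpow]
        calc D * ((Real.sqrt 2) ^ (k:ℝ) * jap η ^ (k:ℝ) * jap ξ ^ (-(k:ℝ))) * ‖η‖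
            = D * (Real.sqrt 2) ^ (k:ℝ) * jap ξ ^ (-(k:ℝ)) * (jap η ^ (k:ℝ) * ‖η‖) := by
              ring
          _ ≤ D * (Real.sqrt 2) ^ (k:ℝ) * jap ξ ^ (-(k:ℝ)) * jap η ^ (2 * (k:ℝ)) := by
              apply mul_le_mul_of_nonneg_left h3
              apply mul_nonneg
                (mul_nonneg hDpos.le (Real.rpow_nonneg (Real.sqrt_nonneg 2) _))
                (Real.rpow_nonneg (jap_nonneg ξ) _)

variable {σ τ : ℝ}

/-- Terms appearing in derivatives of `exp (g)`: products of difference factors. -/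
inductive Term (σ : ℝ) : ℕ → (E d → E d → ℝ) → Prop
  | one : Term σ 0 (fun _ _ => 1)
  | mul {k n : ℕ} {f : E d → ℝ} {u : E d → E d → ℝ} (hk : 1 ≤ k)
      (hf : Sym (σ - k) f) (hu : Term σ n u) :
      Term σ (k + n) (fun η ξ => (f (ξ + η) - f ξ) * u η ξ)

/-- Finite sums of terms. -/
inductive TSum (σ : ℝ) : ℕ → (E d → E d → ℝ) → Prop
  | zero (n : ℕ) : TSum σ n (fun _ _ => 0)
  | add {n : ℕ} {u v : E d → E d → ℝ} :
      Term σ n u → TSum σ n v → TSum σ n (fun η ξ => u η ξ + v η ξ)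

lemma TSum.congr {n : ℕ} {u v : E d → E d → ℝ} (h : TSum σ n u)
    (e : ∀ η ξ, u η ξ = v η ξ) : TSum σ n v := by
  have : u = v := funext fun η => funext fun ξ => e η ξ
  rwa [this] at h

lemma TSum.cast {n m : ℕ} {u : E d → E d → ℝ} (e : n = m) (h : TSum σ n u) :
    TSum σ m u := e ▸ h

lemma Term.toTSum {n : ℕ} {u : E d → E d → ℝ} (h : Term σ n u) : TSum σ n u :=
  (TSum.add h (TSum.zero n)).congr (fun η ξ => by ring)

lemma TSum.addTS {n : ℕ} {u v : E d → E d → ℝ} (hu : TSum σ n u) (hv : TSum σ n v) :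
    TSum σ n (fun η ξ => u η ξ + v η ξ) := by
  induction hu with
  | zero => exact hv.congr (fun η ξ => by ring)
  | @add u' v' ht hts ih =>
      exact ((TSum.add ht ih).congr (fun η ξ => by ring))

lemma TSum.mulFac {k n : ℕ} {f : E d → ℝ} {v : E d → E d → ℝ} (hk : 1 ≤ k)
    (hf : Sym (σ - k) f) (hv : TSum σ n v) :
    TSum σ (k + n) (fun η ξ => (f (ξ + η) - f ξ) * v η ξ) := by
  induction hv with
  | zero => exact (TSum.zero (k + _)).congr (fun η ξ => by ring)
  | @add u' v' ht hts ih =>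
      exact ((TSum.add (Term.mul hk hf ht) ih).congr (fun η ξ => by ring))

lemma Term.bound (hσ1 : σ ≤ 1) {n : ℕ} {u : E d → E d → ℝ} (h : Term σ n u) :
    ∃ C : ℝ, 0 < C ∧ ∀ η ξ : E d,
      |u η ξ| ≤ C * Jp (-(n:ℝ)) ξ * Jp (2 * (n:ℝ)) η := by
  induction h with
  | one =>
      refine ⟨1, one_pos, fun η ξ => ?_⟩
      norm_num [Jp_zero]
  | @mul k n f u hk hf hu ih =>
      obtain ⟨C1, hC1, hb1⟩ := fac_bound hσ1 hk hf
      obtain ⟨C2, hC2, hb2⟩ := ih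
      refine ⟨C1 * C2, by positivity, fun η ξ => ?_⟩
      have e1 : (-(k:ℝ)) + (-(n:ℝ)) = -(((k + n : ℕ)):ℝ) := by push_cast; ring
      have e2 : (2 * (k:ℝ)) + (2 * (n:ℝ)) = 2 * (((k + n : ℕ)):ℝ) := by push_cast; ring
      calc |(f (ξ + η) - f ξ) * u η ξ| = |f (ξ + η) - f ξ| * |u η ξ| := abs_mul _ _
        _ ≤ (C1 * Jp (-(k:ℝ)) ξ * Jp (2 * (k:ℝ)) η) * (C2 * Jp (-(n:ℝ)) ξ * Jp (2 * (n:ℝ)) η) := by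
            apply mul_le_mul (hb1 η ξ) (hb2 η ξ) (abs_nonneg _)
            have := Jp_pos (-(k:ℝ)) ξ
            have := Jp_pos (2 * (k:ℝ)) η
            positivity
        _ = C1 * C2 * (Jp (-(k:ℝ)) ξ * Jp (-(n:ℝ)) ξ) * (Jp (2 * (k:ℝ)) η * Jp (2 * (n:ℝ)) η) := by
            ring
        _ = C1 * C2 * Jp (-((k + n : ℕ):ℝ)) ξ * Jp (2 * ((k + n : ℕ):ℝ)) η := by
            rw [← Jp_add, ← Jp_add, e1, e2]

lemma TSum.bound (hσ1 : σ ≤ 1) {n : ℕ} {u : E d → E d → ℝ} (h : TSum σ n u) :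
    ∃ C : ℝ, 0 < C ∧ ∀ η ξ : E d,
      |u η ξ| ≤ C * Jp (-(n:ℝ)) ξ * Jp (2 * (n:ℝ)) η := by
  induction h with
  | zero =>
      refine ⟨1, one_pos, fun η ξ => ?_⟩
      have := Jp_pos (-(n:ℝ)) ξ
      have := Jp_pos (2 * (n:ℝ)) η
      simp only [abs_zero]
      positivity
  | @add u' v' ht hts ih =>
      obtain ⟨C1, hC1, hb1⟩ := ht.bound hσ1
      obtain ⟨C2, hC2, hb2⟩ := ih
      refine ⟨C1 + C2, by positivity, fun η ξ => ?_⟩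
      calc |u' η ξ + v' η ξ| ≤ |u' η ξ| + |v' η ξ| := abs_add_le _ _
        _ ≤ C1 * Jp (-(n:ℝ)) ξ * Jp (2 * (n:ℝ)) η + C2 * Jp (-(n:ℝ)) ξ * Jp (2 * (n:ℝ)) η :=
            add_le_add (hb1 η ξ) (hb2 η ξ)
        _ = (C1 + C2) * Jp (-(n:ℝ)) ξ * Jp (2 * (n:ℝ)) η := by ring

lemma diff_translate {f : E d → ℝ} (hf : Differentiable ℝ f) (η : E d) :
    Differentiable ℝ (fun ξ : E d => f (ξ + η)) :=
  hf.comp (differentiable_id.add_const η)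

lemma pder_translate {f : E d → ℝ} (hf : Differentiable ℝ f) (η : E d) (i : Fin d)
    (ξ : E d) : pder i (fun ξ' : E d => f (ξ' + η)) ξ = pder i f (ξ + η) := by
  have h1 : HasFDerivAt (fun ξ' : E d => f (ξ' + η)) (fderiv ℝ f (ξ + η)) ξ := by
    have h2 : HasFDerivAt (fun ξ' : E d => ξ' + η) (ContinuousLinearMap.id ℝ (E d)) ξ :=
      (hasFDerivAt_id ξ).add_const η
    have h3 := ((hf (ξ + η)).hasFDerivAt).comp ξ h2
    rw [ContinuousLinearMap.comp_id] at h3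
    exact h3
  rw [pder, pder, h1.fderiv]

lemma Term.diff {n : ℕ} {u : E d → E d → ℝ} (h : Term σ n u) (η : E d) :
    Differentiable ℝ (fun ξ => u η ξ) := by
  induction h with
  | one => exact differentiable_const 1
  | @mul k n f u hk hf hu ih =>
      exact ((diff_translate hf.differentiable η).sub hf.differentiable).mul ih

lemma TSum.diff {n : ℕ} {u : E d → E d → ℝ} (h : TSum σ n u) (η : E d) :
    Differentiable ℝ (fun ξ => u η ξ) := by
  induction h with
  | zero => exact differentiable_const 0
  | @add u' v' ht hts ih => exact (ht.diff η).add ih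

lemma Term.pderTS {n : ℕ} {u : E d → E d → ℝ} (h : Term σ n u) (i : Fin d) :
    TSum σ (n + 1) (fun η ξ => pder i (u η) ξ) := by
  induction h with
  | one =>
      apply (TSum.zero 1).congr
      intro η ξ
      simp [pder]
  | @mul k m f u hk hf hu ih =>
      have hsymp : ∀ j : Fin d, Sym (σ - ((k + 1 : ℕ) : ℝ)) (pder j f) := by
        intro j
        have := hf.pder j
        have e : σ - (k:ℝ) - 1 = σ - ((k + 1 : ℕ) : ℝ) := by push_cast; ring
        rwa [e] at this
      have hstep : ∀ η ξ, pder i (fun ξ' => (f (ξ' + η) - f ξ') * u η ξ') ξ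
          = ((pder i f) (ξ + η) - (pder i f) ξ) * u η ξ
            + (f (ξ + η) - f ξ) * pder i (u η) ξ := by
        intro η ξ
        have hdf : Differentiable ℝ (fun ξ' : E d => f (ξ' + η)) :=
          diff_translate hf.differentiable η
        have hdfac : Differentiable ℝ (fun ξ' : E d => f (ξ' + η) - f ξ') :=
          hdf.sub hf.differentiable
        have hdu : Differentiable ℝ (fun ξ' => u η ξ') := hu.diff η
        rw [pder, fderiv_fun_mul (hdfac ξ) (hdu ξ)]
        simp only [ContinuousLinearMap.add_apply, ContinuousLinearMap.smul_apply,
          smul_eq_mul]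
        have hsub : fderiv ℝ (fun ξ' : E d => f (ξ' + η) - f ξ') ξ
            (EuclideanSpace.single i 1)
            = pder i (fun ξ' : E d => f (ξ' + η)) ξ - pder i f ξ := by
          rw [fderiv_fun_sub (hdf ξ) (hf.differentiable ξ)]
          rfl
        rw [hsub, pder_translate hf.differentiable η i ξ]
        have : (fderiv ℝ (fun ξ' => u η ξ') ξ) (EuclideanSpace.single i 1)
            = pder i (u η) ξ := rfl
        rw [this]
        ring
      have h1 : Term σ ((k + 1) + m) (fun η ξ =>
          ((pder i f) (ξ + η) - (pder i f) ξ) * u η ξ) :=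
        Term.mul (by omega) (hsymp i) hu
      have h2 : TSum σ (k + (m + 1)) (fun η ξ =>
          (f (ξ + η) - f ξ) * pder i (u η) ξ) :=
        TSum.mulFac hk hf ih
      have h3 := (h1.toTSum.cast (by omega : (k + 1) + m = (k + m) + 1)).addTS
        (h2.cast (by omega : k + (m + 1) = (k + m) + 1))
      exact h3.congr (fun η ξ => (hstep η ξ).symm)

lemma TSum.pderTS {n : ℕ} {u : E d → E d → ℝ} (h : TSum σ n u) (i : Fin d) :
    TSum σ (n + 1) (fun η ξ => pder i (u η) ξ) := by
  induction h with
  | zero =>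
      apply (TSum.zero (n + 1)).congr
      intro η ξ
      simp [pder]
  | @add u' v' ht hts ih =>
      have hstep : ∀ η ξ, pder i (fun ξ' => u' η ξ' + v' η ξ') ξ
          = pder i (u' η) ξ + pder i (v' η) ξ := by
        intro η ξ
        rw [pder, fderiv_fun_add (ht.diff η ξ) (hts.diff η ξ)]
        rfl
      exact ((ht.pderTS i).addTS ih).congr (fun η ξ => (hstep η ξ).symm)

/-- The conjugation weight exponent. -/
def gg (σ τ : ℝ) (η ξ : E d) : ℝ := τ * jap (ξ + η) ^ σ - τ * jap ξ ^ σ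

/-- `Fτ = τ ⟨ξ⟩^σ`. -/
def Ft (σ τ : ℝ) (ξ : E d) : ℝ := τ * Jp σ ξ

lemma Ft_sym : Sym σ (Ft σ τ : E d → ℝ) := Sym.smul τ (Sym.jpow σ)

lemma gg_eq (η ξ : E d) : gg σ τ η ξ = Ft σ τ (ξ + η) - Ft σ τ ξ := by
  rw [gg, Ft, Ft, jap_rpow, jap_rpow]

lemma gg_diff (η : E d) : Differentiable ℝ (fun ξ => gg σ τ η ξ) := by
  have : (fun ξ => gg σ τ η ξ) = fun ξ => Ft σ τ (ξ + η) - Ft σ τ ξ :=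
    funext fun ξ => gg_eq η ξ
  rw [this]
  exact (diff_translate (Ft_sym (τ := τ)).differentiable η).sub
    (Ft_sym).differentiable

lemma pder_gg (η : E d) (i : Fin d) (ξ : E d) :
    pder i (fun ξ' => gg σ τ η ξ') ξ
      = pder i (Ft σ τ) (ξ + η) - pder i (Ft σ τ) ξ := by
  have h : (fun ξ' => gg σ τ η ξ') = fun ξ' => Ft σ τ (ξ' + η) - Ft σ τ ξ' :=
    funext fun ξ' => gg_eq η ξ'
  rw [h, pder, fderiv_fun_sub (diff_translate (Ft_sym (τ := τ)).differentiable η ξ)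
    ((Ft_sym (τ := τ)).differentiable ξ)]
  have : (fderiv ℝ (fun ξ' : E d => Ft σ τ (ξ' + η)) ξ
      - fderiv ℝ (Ft σ τ) ξ) (EuclideanSpace.single i 1)
      = pder i (fun ξ' : E d => Ft σ τ (ξ' + η)) ξ - pder i (Ft σ τ) ξ := rfl
  rw [this, pder_translate (Ft_sym (τ := τ)).differentiable η i ξ]

/-- Functions of the form (sum of terms) × e^g. -/
def Good (σ τ : ℝ) (n : ℕ) (h : E d → E d → ℝ) : Prop :=
  ∃ v, TSum σ n v ∧ ∀ η ξ, h η ξ = v η ξ * Real.exp (gg σ τ η ξ)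

lemma Good.base : Good (d := d) σ τ 0 (fun η ξ => Real.exp (gg σ τ η ξ)) :=
  ⟨fun _ _ => 1, (TSum.add Term.one (TSum.zero 0)).congr (fun η ξ => by ring),
    fun η ξ => by ring⟩

lemma Good.cast {n m : ℕ} {h : E d → E d → ℝ} (e : n = m) (hg : Good σ τ n h) :
    Good σ τ m h := e ▸ hg

lemma Good.pder {n : ℕ} {h : E d → E d → ℝ} (hg : Good σ τ n h) (i : Fin d) :
    Good σ τ (n + 1) (fun η ξ => _root_.pder i (h η) ξ) := by
  obtain ⟨v, hv, he⟩ := hg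
  have hfac : ∀ j : Fin d, Sym (σ - ((1:ℕ):ℝ)) (_root_.pder j (Ft σ τ)) := by
    intro j
    have := Sym.pder (Ft_sym (σ := σ) (τ := τ) (d := d)) j
    have e : σ - 1 = σ - ((1:ℕ):ℝ) := by norm_num
    rwa [e] at this
  refine ⟨fun η ξ => _root_.pder i (v η) ξ
      + (_root_.pder i (Ft σ τ) (ξ + η) - _root_.pder i (Ft σ τ) ξ) * v η ξ, ?_, ?_⟩
  · have h1 := hv.pderTS i
    have h2 : TSum σ (1 + n) (fun η ξ =>
        (_root_.pder i (Ft σ τ) (ξ + η) - _root_.pder i (Ft σ τ) ξ) * v η ξ) :=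
      TSum.mulFac le_rfl (hfac i) hv
    exact h1.addTS (h2.cast (by omega))
  · intro η ξ
    show _root_.pder i (h η) ξ = _
    have hhη : h η = fun ξ' => v η ξ' * Real.exp (gg σ τ η ξ') :=
      funext fun ξ' => he η ξ'
    rw [hhη, _root_.pder]
    have hdv : Differentiable ℝ (fun ξ' => v η ξ') := hv.diff η
    have hde : Differentiable ℝ (fun ξ' => Real.exp (gg σ τ η ξ')) :=
      Real.differentiable_exp.comp (gg_diff η)
    rw [fderiv_fun_mul (hdv ξ) (hde ξ)]
    simp only [ContinuousLinearMap.add_apply, ContinuousLinearMap.smul_apply, smul_eq_mul]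
    have hexp : fderiv ℝ (fun ξ' => Real.exp (gg σ τ η ξ')) ξ (EuclideanSpace.single i 1)
        = Real.exp (gg σ τ η ξ) * _root_.pder i (fun ξ' => gg σ τ η ξ') ξ := by
      rw [fderiv_exp (gg_diff η ξ)]
      simp only [ContinuousLinearMap.smul_apply, smul_eq_mul]
      rfl
    have hv' : fderiv ℝ (fun ξ' => v η ξ') ξ (EuclideanSpace.single i 1)
        = _root_.pder i (v η) ξ := rfl
    rw [hexp, hv', pder_gg η i ξ]
    ring

lemma Good.iterate {n : ℕ} {h : E d → E d → ℝ} (hg : Good σ τ n h) (i : Fin d) (k : ℕ) :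
    Good σ τ (n + k) (fun η ξ => (_root_.pder i)^[k] (h η) ξ) := by
  induction k with
  | zero => exact hg
  | succ k ih =>
      have h1 := ih.pder i
      have h2 : (fun η ξ => _root_.pder i ((fun η' => (_root_.pder i)^[k] (h η')) η) ξ)
          = fun η ξ => (_root_.pder i)^[k + 1] (h η) ξ := by
        funext η ξ
        rw [Function.iterate_succ_apply' (_root_.pder i) k (h η)]
      rw [← h2]
      exact (h1.cast (by omega))

lemma Good.foldr (β : Fin d → ℕ) (L : List (Fin d)) {n : ℕ} {h : E d → E d → ℝ}
    (hg : Good σ τ n h) :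
    Good σ τ (n + (L.map β).sum)
      (fun η ξ => (L.foldr (fun i g => (_root_.pder i)^[β i] g) (h η)) ξ) := by
  induction L generalizing n h hg with
  | nil => exact hg
  | cons i L ih =>
      have h1 := (ih hg).iterate i (β i)
      have h2 : (fun η ξ => (_root_.pder i)^[β i]
            ((fun η' => (L.foldr (fun j g => (_root_.pder j)^[β j] g) (h η'))) η) ξ)
          = fun η ξ => ((i :: L).foldr (fun j g => (_root_.pder j)^[β j] g) (h η)) ξ := by
        funext η ξ
        rfl
      rw [← h2]
      exact h1.cast (by simp [List.sum_cons]; omega)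

end S15

open S15

/-- Derivative bounds for the conjugation weight:
`|∂_ξ^β e^{τ⟨ξ+η⟩^σ − τ⟨ξ⟩^σ}| ≤ C ⟨ξ⟩^{−|β|} ⟨η⟩^{2|β|} e^{τ⟨ξ+η⟩^σ − τ⟨ξ⟩^σ}`. -/
theorem stmt_15 (σ τ : ℝ) (hσ0 : 0 < σ) (hσ1 : σ < 1) (d : ℕ) (β : Fin d → ℕ) :
    ∃ C : ℝ, 0 < C ∧
      ∀ ξ η : E d,
        ‖mpder β (fun ξ' => Real.exp (τ * jap (ξ' + η) ^ σ - τ * jap ξ' ^ σ)) ξ‖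
          ≤ C * jap ξ ^ (-(∑ i, (β i : ℝ))) * jap η ^ (2 * ∑ i, (β i : ℝ)) *
              Real.exp (τ * jap (ξ + η) ^ σ - τ * jap ξ ^ σ) := by
  set N : ℕ := ∑ i, β i with hN
  have hgood := Good.foldr (σ := σ) (τ := τ) β (List.finRange d) (Good.base)
  obtain ⟨v, hv, he⟩ := hgood
  rw [Nat.zero_add] at hv
  obtain ⟨C, hC, hb⟩ := hv.bound hσ1.le
  have hsum : ((List.finRange d).map β).sum = N := by
    rw [hN, Finset.sum]; rfl
  refine ⟨C, hC, fun ξ η => ?_⟩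
  have hmp : mpder β (fun ξ' => Real.exp (τ * jap (ξ' + η) ^ σ - τ * jap ξ' ^ σ)) ξ
      = v η ξ * Real.exp (gg σ τ η ξ) := by
    have := he η ξ
    rw [← this]
    rfl
  have hcast1 : (-(∑ i, (β i : ℝ))) = -((N:ℕ):ℝ) := by
    rw [hN]; push_cast; ring
  have hcast2 : (2 * ∑ i, (β i : ℝ)) = 2 * ((N:ℕ):ℝ) := by
    rw [hN]; push_cast; ring
  rw [hmp, hcast1, hcast2]
  have hgge : gg σ τ η ξ = τ * jap (ξ + η) ^ σ - τ * jap ξ ^ σ := rfl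
  rw [Real.norm_eq_abs, abs_mul, abs_of_pos (Real.exp_pos _), hgge]
  have hb1 := hb η ξ
  rw [hsum] at hb1
  apply mul_le_mul_of_nonneg_right _ (Real.exp_pos _).le
  calc |v η ξ| ≤ C * Jp (-((N:ℕ):ℝ)) ξ * Jp (2 * ((N:ℕ):ℝ)) η := hb1
    _ = C * jap ξ ^ (-((N:ℕ):ℝ)) * jap η ^ (2 * ((N:ℕ):ℝ)) := by
        rw [jap_rpow, jap_rpow]
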